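/- arXiv:2601.18224 — 2 statements merged into one kernel-verified Lean document; each statement's English description precedes it below -/
import Mathlib

section
/- Let k_1 ≥ k_2 ≥ 1, C > 0, ε_0 ≥ 0, and δ_k = k_2/(k+k_1). If (ε_k) is a sequence of non-negative reals satisfying ε_{k+1} ≤ (1 − δ_k + C·δ_k²)·ε_k for all k, then ε_k ≤ N/(k+k_1)^{k_2} for all k, where N = ε_0 · k_1^{k_2} · exp(C·k_2²·(k_1+1)/k_1²). -/
/-- Polynomial decay of the optimality gap for predefined step-sizes,
case `d = 1`: `ε k ≤ N / (k + k₁) ^ k₂` with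
`N = ε 0 * k₁ ^ k₂ * exp (C * k₂ ^ 2 * (k₁ + 1) / k₁ ^ 2)`. -/
theorem stmt_3 (k₁ k₂ C : ℝ) (hk : 1 ≤ k₂) (hk' : k₂ ≤ k₁) (hC : 0 < C)
    (δ ε : ℕ → ℝ) (hδ : ∀ k : ℕ, δ k = k₂ / ((k : ℝ) + k₁))
    (hεnn : ∀ k, 0 ≤ ε k) (hε0 : 0 ≤ ε 0)
    (hrec : ∀ k, ε (k+1) ≤ (1 - δ k + C * δ k ^ 2) * ε k)
    (N : ℝ)
    (hN : N = ε 0 * k₁ ^ k₂ * Real.exp (C * k₂ ^ 2 * (k₁ + 1) / k₁ ^ 2)) :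
    ∀ k : ℕ, ε k ≤ N / ((k : ℝ) + k₁) ^ k₂ := by
  have hk1 : (1:ℝ) ≤ k₁ := hk.trans hk'
  have hk1pos : (0:ℝ) < k₁ := lt_of_lt_of_le one_pos hk1
  have hk2pos : (0:ℝ) < k₂ := lt_of_lt_of_le one_pos hk
  have hpos : ∀ j : ℕ, (0:ℝ) < (j:ℝ) + k₁ := fun j => by positivity
  -- sum of inverse squares, with one extra term
  have hS2 : ∀ k : ℕ, ∑ j ∈ Finset.range (k+1), (1/((j:ℝ)+k₁))^2
      ≤ 1/k₁^2 + 1/k₁ - 1/((k:ℝ)+k₁) := by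
    intro k
    induction k with
    | zero =>
      rw [Finset.sum_range_one]
      push_cast
      ring_nf
      simp
    | succ n ih =>
      rw [Finset.sum_range_succ]
      have h1 : (0:ℝ) < (n:ℝ) + k₁ := hpos n
      have h2 : (0:ℝ) < ((n:ℝ)+1) + k₁ := by linarith
      have hstep : (1/(((n:ℝ)+1)+k₁))^2 ≤ 1/((n:ℝ)+k₁) - 1/(((n:ℝ)+1)+k₁) := by
        have hd : 1/((n:ℝ)+k₁) - 1/(((n:ℝ)+1)+k₁)
            = 1/(((n:ℝ)+k₁)*(((n:ℝ)+1)+k₁)) := by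
          field_simp
          ring
        rw [hd, div_pow, one_pow]
        apply one_div_le_one_div_of_le (by positivity)
        nlinarith
      push_cast
      push_cast at ih
      linarith
  have hS2' : ∀ k : ℕ, ∑ j ∈ Finset.range k, (1/((j:ℝ)+k₁))^2 ≤ 1/k₁^2 + 1/k₁ := by
    intro k
    have h1 : ∑ j ∈ Finset.range k, (1/((j:ℝ)+k₁))^2
        ≤ ∑ j ∈ Finset.range (k+1), (1/((j:ℝ)+k₁))^2 := by
      apply Finset.sum_le_sum_of_subset_of_nonneg
      · exact Finset.range_subset_range.2 (Nat.le_succ k)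
      · intro i _ _; positivity
    have h2 := hS2 k
    have h3 : (0:ℝ) < 1/((k:ℝ)+k₁) := by positivity
    linarith
  -- lower bound for harmonic-type sum
  have hS1 : ∀ k : ℕ, Real.log ((k:ℝ)+k₁) - Real.log k₁
      ≤ ∑ j ∈ Finset.range k, 1/((j:ℝ)+k₁) := by
    intro k
    induction k with
    | zero => simp
    | succ n ih =>
      rw [Finset.sum_range_succ]
      have h1 : (0:ℝ) < (n:ℝ) + k₁ := hpos n
      have h2 : (0:ℝ) < ((n:ℝ)+1) + k₁ := by linarith
      have hstep : Real.log (((n:ℝ)+1)+k₁) - Real.log ((n:ℝ)+k₁) ≤ 1/((n:ℝ)+k₁) := by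
        rw [← Real.log_div (by positivity) (by positivity)]
        have := Real.log_le_sub_one_of_pos (show (0:ℝ) < (((n:ℝ)+1)+k₁)/((n:ℝ)+k₁) by positivity)
        have he : (((n:ℝ)+1)+k₁)/((n:ℝ)+k₁) - 1 = 1/((n:ℝ)+k₁) := by
          field_simp
          ring
        linarith
      push_cast
      linarith
  -- main exponential bound by induction
  have hmain : ∀ k : ℕ, ε k ≤ ε 0 * Real.exp (∑ j ∈ Finset.range k, (C * δ j ^ 2 - δ j)) := by
    intro k
    induction k with
    | zero => simp
    | succ n ih =>
      calc ε (n+1) ≤ (1 - δ n + C * δ n ^ 2) * ε n := hrec n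
        _ ≤ Real.exp (C * δ n ^ 2 - δ n) * ε n := by
            apply mul_le_mul_of_nonneg_right _ (hεnn n)
            have := Real.add_one_le_exp (C * δ n ^ 2 - δ n)
            linarith
        _ ≤ Real.exp (C * δ n ^ 2 - δ n) *
            (ε 0 * Real.exp (∑ j ∈ Finset.range n, (C * δ j ^ 2 - δ j))) := by
            exact mul_le_mul_of_nonneg_left ih (Real.exp_nonneg _)
        _ = ε 0 * Real.exp (∑ j ∈ Finset.range (n+1), (C * δ j ^ 2 - δ j)) := by
            rw [Finset.sum_range_succ, Real.exp_add]; ring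
  intro k
  -- bound the sums
  have hsum2 : ∑ j ∈ Finset.range k, δ j ^ 2 ≤ k₂^2 * (1/k₁^2 + 1/k₁) := by
    have : ∀ j ∈ Finset.range k, δ j ^ 2 = k₂^2 * (1/((j:ℝ)+k₁))^2 := by
      intro j _
      rw [hδ, div_pow, div_pow, one_pow]
      ring
    rw [Finset.sum_congr rfl this, ← Finset.mul_sum]
    have := hS2' k
    nlinarith [sq_nonneg k₂]
  have hsum1 : k₂ * (Real.log ((k:ℝ)+k₁) - Real.log k₁) ≤ ∑ j ∈ Finset.range k, δ j := by
    have he : ∀ j ∈ Finset.range k, δ j = k₂ * (1/((j:ℝ)+k₁)) := by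
      intro j _
      rw [hδ]; ring
    rw [Finset.sum_congr rfl he, ← Finset.mul_sum]
    exact mul_le_mul_of_nonneg_left (hS1 k) (le_of_lt hk2pos)
  have hsplit : ∑ j ∈ Finset.range k, (C * δ j ^ 2 - δ j)
      = C * (∑ j ∈ Finset.range k, δ j ^ 2) - ∑ j ∈ Finset.range k, δ j := by
    rw [Finset.sum_sub_distrib, Finset.mul_sum]
  have hexp : ∑ j ∈ Finset.range k, (C * δ j ^ 2 - δ j)
      ≤ C * (k₂^2 * (1/k₁^2 + 1/k₁)) - k₂ * (Real.log ((k:ℝ)+k₁) - Real.log k₁) := by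
    rw [hsplit]
    have := mul_le_mul_of_nonneg_left hsum2 (le_of_lt hC)
    linarith
  have hfin : ε k ≤ ε 0 * Real.exp (C * (k₂^2 * (1/k₁^2 + 1/k₁))
      - k₂ * (Real.log ((k:ℝ)+k₁) - Real.log k₁)) :=
    le_trans (hmain k) (mul_le_mul_of_nonneg_left (Real.exp_le_exp.2 hexp) hε0)
  have hrhs : N / ((k:ℝ)+k₁) ^ k₂
      = ε 0 * Real.exp (C * (k₂^2 * (1/k₁^2 + 1/k₁))
        - k₂ * (Real.log ((k:ℝ)+k₁) - Real.log k₁)) := by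
    rw [hN, Real.rpow_def_of_pos hk1pos, Real.rpow_def_of_pos (hpos k)]
    have hA : C * k₂ ^ 2 * (k₁ + 1) / k₁ ^ 2 = C * (k₂^2 * (1/k₁^2 + 1/k₁)) := by
      field_simp
      ring
    rw [hA, show C * (k₂^2 * (1/k₁^2 + 1/k₁)) - k₂ * (Real.log ((k:ℝ)+k₁) - Real.log k₁)
        = (C * (k₂^2 * (1/k₁^2 + 1/k₁)) + Real.log k₁ * k₂) - Real.log ((k:ℝ)+k₁) * k₂ by ring,
      Real.exp_sub, Real.exp_add]
    ring
  rw [hrhs]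
  exact hfin
end

section
/- Let r > 2, set ρ = 1 − 2/(r(r−1)) and let k_1 ≥ k_2 ≥ 1, C* > 0, and δ_k = k_2/(k+k_1). Suppose (ε_k) is a sequence of non-negative reals satisfying ε_{k+1} ≤ (1 − δ_k)·ε_k + C*·δ_k²·ε_k^{1−ρ} for all k ≥ 0. Let s be a real with 0 < s ≤ min{k_2, 1/ρ}, s < k_2, and let N = max{ ε_0·k_1^s, (C*·k_2²/(k_2 − s))^{1/ρ} }. Then ε_k ≤ N/(k+k_1)^s for all k ≥ 0. -/
open Real

lemma bern_aux {t s : ℝ} (ht : 1 ≤ t) (hs : 0 < s) (hst : s < t) :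
    (1 - s / t) * (t + 1) ^ s ≤ t ^ s := by
  have ht0 : (0:ℝ) < t := lt_of_lt_of_le one_pos ht
  have ht1 : (0:ℝ) < t + 1 := by linarith
  rcases le_or_gt s 1 with hs1 | hs1
  · -- (t+1)^s = t^s * (1+1/t)^s ≤ t^s * (1 + s/t)
    have h1 : (t + 1) ^ s = t ^ s * (1 + 1/t) ^ s := by
      rw [← Real.mul_rpow ht0.le (by positivity)]
      congr 1
      field_simp
    have h2 : (1 + 1/t) ^ s ≤ 1 + s * (1/t) :=
      rpow_one_add_le_one_add_mul_self (by have := one_div_pos.mpr ht0; linarith) hs.le hs1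
    have h3 : (1 - s / t) * (t + 1) ^ s ≤ (1 - s / t) * (t ^ s * (1 + s * (1/t))) := by
      rw [h1]
      have hnn : 0 ≤ 1 - s / t := by
        rw [sub_nonneg, div_le_one ht0]; exact hst.le
      apply mul_le_mul_of_nonneg_left _ hnn
      exact mul_le_mul_of_nonneg_left h2 (Real.rpow_nonneg ht0.le s)
    refine h3.trans ?_
    have : (1 - s / t) * (1 + s * (1/t)) ≤ 1 := by
      have : (1 - s / t) * (1 + s * (1/t)) = 1 - (s/t)^2 := by
        field_simp; ring
      rw [this]
      nlinarith [sq_nonneg (s/t)]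
    nlinarith [Real.rpow_nonneg ht0.le s]
  · -- s ≥ 1 : Bernoulli with x = -1/(t+1)
    have hb : 1 + s * (-(1/(t+1))) ≤ (1 + (-(1/(t+1)))) ^ s := by
      apply one_add_mul_self_le_rpow_one_add _ hs1.le
      have : 1/(t+1) ≤ 1 := by
        rw [div_le_one ht1]; linarith
      linarith
    have he : (1 + (-(1/(t+1)))) = t / (t+1) := by field_simp; ring
    rw [he] at hb
    have h2 : (t/(t+1)) ^ s = t ^ s / (t+1) ^ s := Real.div_rpow ht0.le ht1.le s
    have h3 : 1 - s / t ≤ 1 - s/(t+1) := by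
      have : s/(t+1) ≤ s/t := by
        apply div_le_div_of_nonneg_left hs.le ht0; linarith
      linarith
    have h4 : 1 - s / t ≤ t ^ s / (t+1) ^ s := by
      rw [← h2]
      refine h3.trans ?_
      calc 1 - s/(t+1) = 1 + s * (-(1/(t+1))) := by ring
        _ ≤ (t/(t+1)) ^ s := hb
    calc (1 - s / t) * (t + 1) ^ s ≤ (t ^ s / (t+1) ^ s) * (t+1) ^ s := by
          apply mul_le_mul_of_nonneg_right h4 (Real.rpow_nonneg ht1.le s)
      _ = t ^ s := by
          field_simp

/-- Polynomial decay of the optimality gap for predefined step-sizes,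
case `d ≥ 2`: under `ε (k+1) ≤ (1 - δ k) * ε k + C* * δ k ^ 2 * ε k ^ (1 - ρ)`
with `ρ = 1 - 2/(r(r-1))`, one has `ε k ≤ N / (k + k₁) ^ s`. -/
theorem stmt_4 (r ρ k₁ k₂ Cs s N : ℝ) (hr : 2 < r)
    (hρ : ρ = 1 - 2 / (r * (r - 1)))
    (hk : 1 ≤ k₂) (hk' : k₂ ≤ k₁) (hCs : 0 < Cs)
    (δ ε : ℕ → ℝ) (hδ : ∀ k : ℕ, δ k = k₂ / ((k : ℝ) + k₁))
    (hεnn : ∀ k, 0 ≤ ε k)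
    (hrec : ∀ k, ε (k+1) ≤ (1 - δ k) * ε k + Cs * δ k ^ 2 * (ε k) ^ (1 - ρ))
    (hs₁ : 0 < s) (hs₂ : s ≤ min k₂ (1 / ρ)) (hs₃ : s < k₂)
    (hN : N = max (ε 0 * k₁ ^ s) ((Cs * k₂ ^ 2 / (k₂ - s)) ^ (1 / ρ))) :
    ∀ k : ℕ, ε k ≤ N / ((k : ℝ) + k₁) ^ s := by
  have hrr : 2 < r * (r - 1) := by nlinarith
  have hρpos : 0 < ρ := by
    rw [hρ]
    have : 2 / (r * (r - 1)) < 1 := by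
      rw [div_lt_one (by linarith)]; linarith
    linarith
  have hρ1 : ρ < 1 := by
    rw [hρ]
    have : 0 < 2 / (r * (r - 1)) := by positivity
    linarith
  have hk₁ : 1 ≤ k₁ := hk.trans hk'
  have hsρ : s * ρ ≤ 1 := by
    have hs' : s ≤ 1 / ρ := hs₂.trans (min_le_right _ _)
    calc s * ρ ≤ (1/ρ) * ρ := by nlinarith
      _ = 1 := by field_simp
  have hXpos : 0 < Cs * k₂ ^ 2 / (k₂ - s) := by
    apply div_pos (by positivity) (by linarith)
  have hNpos : 0 < N := by
    rw [hN]
    exact lt_max_of_lt_right (Real.rpow_pos_of_pos hXpos _)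
  have hNρ : Cs * k₂ ^ 2 ≤ (k₂ - s) * N ^ ρ := by
    have h1 : (Cs * k₂ ^ 2 / (k₂ - s)) ^ (1/ρ) ≤ N := (le_max_right _ _).trans hN.ge
    have h2 : ((Cs * k₂ ^ 2 / (k₂ - s)) ^ (1/ρ)) ^ ρ ≤ N ^ ρ :=
      Real.rpow_le_rpow (Real.rpow_nonneg hXpos.le _) h1 hρpos.le
    rw [← Real.rpow_mul hXpos.le, one_div_mul_cancel hρpos.ne', Real.rpow_one] at h2
    rw [div_le_iff₀ (by linarith : (0:ℝ) < k₂ - s)] at h2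
    linarith [h2]
  intro k
  induction k with
  | zero =>
    have hk₁s : (0:ℝ) < k₁ ^ s := Real.rpow_pos_of_pos (by linarith) s
    rw [Nat.cast_zero, zero_add, le_div_iff₀ hk₁s]
    exact (le_max_left _ _).trans hN.ge
  | succ k ih =>
    set t : ℝ := (k : ℝ) + k₁ with htdef
    have ht1 : 1 ≤ t := by
      have : (0:ℝ) ≤ (k:ℝ) := Nat.cast_nonneg k
      simp only [htdef]; linarith
    have ht0 : (0:ℝ) < t := lt_of_lt_of_le one_pos ht1
    have htk₂ : k₂ ≤ t := by
      have : (0:ℝ) ≤ (k:ℝ) := Nat.cast_nonneg k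
      simp only [htdef]; linarith
    have hst : s < t := lt_of_lt_of_le hs₃ htk₂
    have hts : (0:ℝ) < t ^ s := Real.rpow_pos_of_pos ht0 s
    have hA : (0:ℝ) < N / t ^ s := div_pos hNpos hts
    set A : ℝ := N / t ^ s with hAdef
    -- recursion with δ substituted
    have step1 : ε (k+1) ≤ (1 - k₂/t) * ε k + Cs * (k₂/t) ^ 2 * (ε k) ^ (1 - ρ) := by
      have := hrec k
      rwa [hδ k] at this
    have h1δ : 0 ≤ 1 - k₂ / t := by
      rw [sub_nonneg, div_le_one ht0]; exact htk₂
    have step2 : (ε k) ^ (1 - ρ) ≤ A ^ (1 - ρ) :=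
      Real.rpow_le_rpow (hεnn k) ih (by linarith)
    have step3 : ε (k+1) ≤ (1 - k₂/t) * A + Cs * (k₂/t) ^ 2 * A ^ (1 - ρ) :=
      step1.trans (add_le_add (mul_le_mul_of_nonneg_left ih h1δ)
        (mul_le_mul_of_nonneg_left step2 (by positivity)))
    -- bound the second term
    have hNρpos : (0:ℝ) < N ^ ρ := Real.rpow_pos_of_pos hNpos ρ
    have htsρ : (0:ℝ) < t ^ (s * ρ) := Real.rpow_pos_of_pos ht0 _
    have hAρ : A ^ ρ = N ^ ρ / t ^ (s * ρ) := by
      rw [hAdef, Real.div_rpow hNpos.le hts.le, ← Real.rpow_mul ht0.le]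
    have eA : A ^ (1 - ρ) = A * (A ^ ρ)⁻¹ := by
      rw [show (1:ℝ) - ρ = 1 + (-ρ) by ring, Real.rpow_add hA, Real.rpow_one,
        Real.rpow_neg hA.le]
    have ht' : t ^ (s * ρ) ≤ t := by
      calc t ^ (s * ρ) ≤ t ^ (1:ℝ) := Real.rpow_le_rpow_of_exponent_le ht1 hsρ
        _ = t := Real.rpow_one t
    have hcoef : Cs * (k₂/t) ^ 2 * (N ^ ρ / t ^ (s * ρ))⁻¹ ≤ (k₂ - s) / t := by
      have e2 : Cs * (k₂/t) ^ 2 * (N ^ ρ / t ^ (s * ρ))⁻¹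
          = (Cs * k₂ ^ 2 * t ^ (s * ρ)) / (t ^ 2 * N ^ ρ) := by
        field_simp
      rw [e2, div_le_div_iff₀ (by positivity) ht0]
      have h1 : Cs * k₂ ^ 2 * t ^ (s * ρ) ≤ Cs * k₂ ^ 2 * t :=
        mul_le_mul_of_nonneg_left ht' (by positivity)
      nlinarith [mul_le_mul_of_nonneg_right hNρ (by positivity : (0:ℝ) ≤ t ^ 2)]
    have step4 : Cs * (k₂/t) ^ 2 * A ^ (1 - ρ) ≤ (k₂ - s) / t * A := by
      rw [eA, hAρ]
      calc Cs * (k₂/t) ^ 2 * (A * (N ^ ρ / t ^ (s * ρ))⁻¹)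
          = (Cs * (k₂/t) ^ 2 * (N ^ ρ / t ^ (s * ρ))⁻¹) * A := by ring
        _ ≤ (k₂ - s) / t * A := mul_le_mul_of_nonneg_right hcoef hA.le
    have heq : (1 - k₂/t) * A + (k₂ - s)/t * A = (1 - s/t) * A := by
      ring
    have step5 : ε (k+1) ≤ (1 - s/t) * A := by
      calc ε (k+1) ≤ (1 - k₂/t) * A + Cs * (k₂/t) ^ 2 * A ^ (1 - ρ) := step3
        _ ≤ (1 - k₂/t) * A + (k₂ - s)/t * A := by linarith
        _ = (1 - s/t) * A := heq
    -- Bernoulli step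
    have hbern := bern_aux ht1 hs₁ hst
    have ht1s : (0:ℝ) < (t + 1) ^ s := Real.rpow_pos_of_pos (by linarith) s
    have step6 : (1 - s/t) * A ≤ N / (t + 1) ^ s := by
      rw [hAdef, show (1 - s/t) * (N / t ^ s) = ((1 - s/t) * N) / t ^ s by ring,
        div_le_div_iff₀ hts ht1s]
      calc (1 - s/t) * N * (t + 1) ^ s = N * ((1 - s/t) * (t + 1) ^ s) := by ring
        _ ≤ N * t ^ s := mul_le_mul_of_nonneg_left hbern hNpos.le
    have hcast : ((k + 1 : ℕ) : ℝ) + k₁ = t + 1 := by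
      simp only [htdef]; push_cast; ring
    rw [hcast]
    exact step5.trans step6
end
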